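/- arXiv:2107.09945 — 2 statements merged into one kernel-verified Lean document; each statement's English description precedes it below -/
import Mathlib

section
/- A subset S of C^ω belongs to Σ⁰₂ (i.e. S is a countable union of closed sets) if and only if S can be expressed as a co-Büchi condition, i.e. there exists a coloring function c : C* → {0,1} such that for every ρ ∈ C^ω, ρ ∈ S if and only if c(ρ_{<n}) = 1 for only finitely many n ∈ ℕ. -/
open Set Topology

noncomputable section

def seqTop (C : Type) : TopologicalSpace (ℕ → C) :=
  @Pi.topologicalSpace ℕ (fun _ => C) (fun _ => ⊥)

def pref {C : Type} (ρ : ℕ → C) (n : ℕ) : List C :=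
  (List.range n).map ρ

lemma pref_length {C : Type} (ρ : ℕ → C) (n : ℕ) : (pref ρ n).length = n := by
  simp [pref]

lemma pref_eq_iff {C : Type} (σ ρ : ℕ → C) (n : ℕ) :
    pref σ n = pref ρ n ↔ ∀ i < n, σ i = ρ i := by
  unfold pref
  constructor
  · intro h i hi
    have := congrArg (fun l => l[i]?) h
    simpa [List.getElem?_map, List.getElem?_range, hi] using this
  · intro h
    apply List.ext_getElem <;> simp_all

lemma pref_mono {C : Type} {σ ρ : ℕ → C} {m n : ℕ} (hmn : m ≤ n)
    (h : pref σ n = pref ρ n) : pref σ m = pref ρ m := by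
  rw [pref_eq_iff] at h ⊢
  exact fun i hi => h i (lt_of_lt_of_le hi hmn)

lemma pref_dropLast {C : Type} (ρ : ℕ → C) (n : ℕ) :
    (pref ρ (n+1)).dropLast = pref ρ n := by
  simp [pref, List.range_succ]

section Topo
variable {C : Type}

lemma cyl_isOpen (ρ : ℕ → C) (n : ℕ) :
    IsOpen[seqTop C] {σ : ℕ → C | pref σ n = pref ρ n} := by
  letI : TopologicalSpace C := ⊥
  haveI : DiscreteTopology C := ⟨rfl⟩
  have : {σ : ℕ → C | pref σ n = pref ρ n} =
      Set.pi (↑(Finset.range n) : Set ℕ) (fun i => {ρ i}) := by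
    ext σ
    simp [pref_eq_iff, Set.mem_pi]
  rw [this]
  exact isOpen_set_pi (Finset.range n).finite_toSet (fun i _ => isOpen_discrete _)

lemma prefSet_isOpen (P : List C → Prop) (n : ℕ) :
    IsOpen[seqTop C] {σ : ℕ → C | P (pref σ n)} := by
  letI : TopologicalSpace C := ⊥
  rw [isOpen_iff_mem_nhds]
  intro σ hσ
  rw [mem_nhds_iff]
  exact ⟨{τ | pref τ n = pref σ n},
    fun τ hτ => by rw [Set.mem_setOf_eq] at hτ ⊢; rw [hτ]; exact hσ,
    cyl_isOpen σ n, rfl⟩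

lemma prefSet_isClosed (P : List C → Prop) (n : ℕ) :
    IsClosed[seqTop C] {σ : ℕ → C | P (pref σ n)} := by
  letI : TopologicalSpace C := ⊥
  rw [← isOpen_compl_iff]
  have : {σ : ℕ → C | P (pref σ n)}ᶜ = {σ : ℕ → C | ¬ P (pref σ n)} := rfl
  rw [this]
  exact prefSet_isOpen (fun w => ¬ P w) n

lemma mem_of_prefixes {F : Set (ℕ → C)}
    (hF : IsClosed[seqTop C] F) {ρ : ℕ → C}
    (h : ∀ n, ∃ σ ∈ F, pref σ n = pref ρ n) : ρ ∈ F := by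
  letI : TopologicalSpace C := ⊥
  rw [← hF.closure_eq, mem_closure_iff]
  intro U hU hρU
  obtain ⟨I, u, hu, hsub⟩ := isOpen_pi_iff.mp hU ρ hρU
  obtain ⟨σ, hσF, hσ⟩ := h (I.sup id + 1)
  refine ⟨σ, hsub ?_, hσF⟩
  intro i hi
  have : σ i = ρ i := (pref_eq_iff σ ρ _).mp hσ i
    (Nat.lt_succ_of_le (Finset.le_sup (f := id) hi))
  rw [this]
  exact (hu i hi).2

/-- A monotone bounded sequence of naturals is eventually constant. -/
lemma mono_bdd_eventually_const {f : ℕ → ℕ} (hf : Monotone f) {i : ℕ}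
    (hb : ∀ n, f n ≤ i) : ∃ M, ∀ n, M ≤ n → f n = f M := by
  have hbdd : BddAbove (Set.range f) := ⟨i, by rintro _ ⟨n, rfl⟩; exact hb n⟩
  have hne : (Set.range f).Nonempty := ⟨f 0, Set.mem_range_self 0⟩
  obtain ⟨M, hM⟩ := Nat.sSup_mem hne hbdd
  refine ⟨M, fun n hn => le_antisymm ?_ (hf hn)⟩
  rw [hM]
  exact le_csSup hbdd (Set.mem_range_self n)

end Topo

/-- `S ⊆ C^ω` is a countable union of closed sets iff it can be expressed as a
co-Büchi condition. -/
theorem statement4 (C : Type) (S : Set (ℕ → C)) :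
    (∃ F : ℕ → Set (ℕ → C), (∀ n, IsClosed[seqTop C] (F n)) ∧ S = ⋃ n, F n) ↔
      ∃ c : List C → Bool, ∀ ρ : ℕ → C,
        ρ ∈ S ↔ {n : ℕ | c (pref ρ n) = true}.Finite := by
  classical
  letI : TopologicalSpace (ℕ → C) := seqTop C
  constructor
  · rintro ⟨F, hFc, rfl⟩
    -- increasing closed sets
    set G : ℕ → Set (ℕ → C) := fun j => ⋃ i ∈ Set.Iic j, F i with hG
    have hGc : ∀ j, IsClosed[seqTop C] (G j) :=
      fun j => Set.Finite.isClosed_biUnion (Set.finite_Iic j) (fun i _ => hFc i)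
    -- the set of indices j such that G j meets the cylinder of w
    set Ms : List C → Set ℕ := fun w => {j | ∃ σ ∈ G j, pref σ w.length = w} with hMs
    set g : List C → ℕ := fun w => sInf (Ms w) with hg
    refine ⟨fun w => if ((Ms w).Nonempty ∧ g w = g w.dropLast) then false else true,
      fun ρ => ?_⟩
    have hMsρ : ∀ n, Ms (pref ρ n) = {j | ∃ σ ∈ G j, pref σ n = pref ρ n} := by
      intro n; rw [hMs]; simp only [pref_length]
    have hanti : ∀ {m n : ℕ}, m ≤ n → Ms (pref ρ n) ⊆ Ms (pref ρ m) := by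
      intro m n hmn
      rw [hMsρ, hMsρ]
      rintro j ⟨σ, hσG, hσ⟩
      exact ⟨σ, hσG, pref_mono hmn hσ⟩
    constructor
    · -- ρ ∈ S → finitely many red prefixes
      intro hρ
      obtain ⟨i, hi⟩ := Set.mem_iUnion.mp hρ
      have hmem : ∀ n, i ∈ Ms (pref ρ n) := by
        intro n
        rw [hMsρ]
        exact ⟨ρ, Set.mem_biUnion (Set.mem_Iic.mpr le_rfl) hi, rfl⟩
      have hne : ∀ n, (Ms (pref ρ n)).Nonempty := fun n => ⟨i, hmem n⟩
      have hmono : Monotone (fun n => g (pref ρ n)) := by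
        intro m n hmn
        exact Nat.sInf_le (hanti hmn (Nat.sInf_mem (hne n)))
      have hbd : ∀ n, g (pref ρ n) ≤ i := fun n => Nat.sInf_le (hmem n)
      obtain ⟨M, hM⟩ := mono_bdd_eventually_const hmono hbd
      apply Set.Finite.subset (Set.finite_Iio (M + 1))
      intro n hn
      rw [Set.mem_setOf_eq] at hn
      by_contra hlt
      rw [Set.mem_Iio, not_lt] at hlt
      obtain ⟨m, rfl⟩ : ∃ m, n = m + 1 := ⟨n - 1, by omega⟩
      have hMm : M ≤ m := by omega
      have : g (pref ρ (m+1)) = g ((pref ρ (m+1)).dropLast) := by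
        rw [pref_dropLast, hM (m+1) (by omega), hM m hMm]
      have hn' : (if ((Ms (pref ρ (m+1))).Nonempty ∧
          g (pref ρ (m+1)) = g ((pref ρ (m+1)).dropLast)) then false else true) = true := hn
      rw [if_pos ⟨hne (m+1), this⟩] at hn'
      exact Bool.false_ne_true hn'
    · -- finitely many red prefixes → ρ ∈ S
      intro hfin
      obtain ⟨N, hN⟩ := hfin.bddAbove
      have hfalse : ∀ n, N + 1 ≤ n →
          (Ms (pref ρ n)).Nonempty ∧ g (pref ρ n) = g ((pref ρ n).dropLast) := by
        intro n hn
        by_contra hcon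
        have : n ∈ {n : ℕ | (if ((Ms (pref ρ n)).Nonempty ∧
            g (pref ρ n) = g ((pref ρ n)).dropLast) then false else true) = true} := by
          rw [Set.mem_setOf_eq, if_neg hcon]
        exact absurd (hN this) (by omega)
      have hconst : ∀ n, N + 1 ≤ n → g (pref ρ n) = g (pref ρ (N+1)) := by
        intro n hn
        induction n with
        | zero => omega
        | succ m ih =>
          rcases Nat.lt_or_ge m (N+1) with h | h
          · have : m + 1 = N + 1 := by omega
            rw [this]
          · have := (hfalse (m+1) (by omega)).2
            rw [pref_dropLast] at this
            rw [this, ih h]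
      set j := g (pref ρ (N+1)) with hj
      have hwit : ∀ n, ∃ σ ∈ G j, pref σ n = pref ρ n := by
        have hge : ∀ n, N + 1 ≤ n → ∃ σ ∈ G j, pref σ n = pref ρ n := by
          intro n hn
          have hmem : g (pref ρ n) ∈ Ms (pref ρ n) := Nat.sInf_mem (hfalse n hn).1
          rw [hconst n hn] at hmem
          rw [hMsρ] at hmem
          exact hmem
        intro n
        rcases Nat.lt_or_ge n (N+1) with h | h
        · obtain ⟨σ, hσG, hσ⟩ := hge (N+1) le_rfl
          exact ⟨σ, hσG, pref_mono (by omega) hσ⟩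
        · exact hge n h
      have hρG : ρ ∈ G j := mem_of_prefixes (hGc j) hwit
      obtain ⟨i, _, hi⟩ := Set.mem_iUnion₂.mp hρG
      exact Set.mem_iUnion.mpr ⟨i, hi⟩
  · -- co-Büchi → countable union of closed sets
    rintro ⟨c, hc⟩
    refine ⟨fun N => {ρ | ∀ n, N ≤ n → c (pref ρ n) = false}, fun N => ?_, ?_⟩
    · show IsClosed {ρ : ℕ → C | ∀ n, N ≤ n → c (pref ρ n) = false}
      have : {ρ : ℕ → C | ∀ n, N ≤ n → c (pref ρ n) = false} =
          ⋂ n, {σ : ℕ → C | (fun w => N ≤ n → c w = false) (pref σ n)} := by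
        ext ρ; simp [Set.mem_iInter]
      rw [this]
      exact isClosed_iInter (fun n => prefSet_isClosed (fun w => N ≤ n → c w = false) n)
    · ext ρ
      rw [hc ρ, Set.mem_iUnion]
      constructor
      · intro hfin
        obtain ⟨N, hN⟩ := hfin.bddAbove
        refine ⟨N + 1, fun n hn => ?_⟩
        by_contra hne
        rw [Bool.not_eq_false] at hne
        exact absurd (hN hne) (by omega)
      · rintro ⟨N, hN⟩
        apply Set.Finite.subset (Set.finite_Iio N)
        intro n hn
        rw [Set.mem_setOf_eq] at hn
        rw [Set.mem_Iio]
        by_contra h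
        rw [hN n (by omega)] at hn
        exact Bool.false_ne_true hn
end
end

section
/- For every nonzero ordinal θ, both Λ_θ and K_θ are closed under intersection with a cylinder: for every S ∈ Λ_θ (respectively S ∈ K_θ) and every finite word h ∈ C*, the set cyl(h) ∩ S belongs to Λ_θ (respectively to K_θ), where cyl(h) = {hρ : ρ ∈ C^ω}. -/
open Set Topology

noncomputable section

def OrdEven (θ : Ordinal) : Prop :=
  ∃ (lam : Ordinal) (k : ℕ), (lam = 0 ∨ Order.IsSuccLimit lam) ∧ θ = lam + 2 * (k : Ordinal)

def HDiffSet {C : Type} (θ : Ordinal) (O : Ordinal → Set (ℕ → C)) : Set (ℕ → C) :=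
  {ρ | (∃ η < θ, ρ ∈ O η) ∧ (OrdEven (sInf {η | η < θ ∧ ρ ∈ O η}) ↔ ¬ OrdEven θ)}

def Dclass (C : Type) (θ : Ordinal) : Set (Set (ℕ → C)) :=
  {S | ∃ O : Ordinal → Set (ℕ → C),
      (∀ η < θ, IsOpen[seqTop C] (O η)) ∧
      (∀ η₁ η₂, η₁ ≤ η₂ → η₂ < θ → O η₁ ⊆ O η₂) ∧
      S = HDiffSet θ O}

def FineLambda (C : Type) : Ordinal → Set (Set (ℕ → C))
  | θ =>
    if θ = 1 then {S | IsOpen[seqTop C] S}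
    else if 1 < θ then
      {S | ∃ (I : Type) (T O : I → Set (ℕ → C)) (η : I → {x : Ordinal // x < θ}),
        (∀ i, IsOpen[seqTop C] (O i)) ∧ (Pairwise fun i j => Disjoint (O i) (O j)) ∧
        (∀ i, T i ⊆ O i) ∧ S = ⋃ i, T i ∧
        ∀ i, T i ∈ FineLambda C (η i) ∨ (T i)ᶜ ∈ FineLambda C (η i)}
    else ∅
termination_by θ => θ
decreasing_by all_goals exact (η i).2

def FineK (C : Type) (θ : Ordinal) : Set (Set (ℕ → C)) :=
  {S | Sᶜ ∈ FineLambda C θ}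

/-- Concatenation of a finite word and an infinite sequence. -/
def catSeq {C : Type} (h : List C) (ρ : ℕ → C) : ℕ → C := fun n =>
  if hn : n < h.length then h.get ⟨n, hn⟩ else ρ (n - h.length)

/-- The cylinder generated by a finite word `h`: all infinite words beginning with `h`. -/
def cylSet {C : Type} (h : List C) : Set (ℕ → C) :=
  {x | ∃ ρ : ℕ → C, x = catSeq h ρ}

set_option linter.unusedVariables false

lemma cylSet_eq {C : Type} (h : List C) :
    cylSet h = ⋂ i : Fin h.length, {x : ℕ → C | x i = h.get i} := by
  ext x
  simp only [cylSet, mem_setOf_eq, mem_iInter]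
  constructor
  · rintro ⟨ρ, rfl⟩ i
    simp [catSeq, i.isLt]
  · intro hx
    refine ⟨fun n => x (n + h.length), funext fun n => ?_⟩
    by_cases hn : n < h.length
    · simpa [catSeq, hn] using hx ⟨n, hn⟩
    · simp [catSeq, hn, Nat.sub_add_cancel (le_of_not_gt hn)]

lemma cyl_clopen {C : Type} (h : List C) :
    @IsClopen _ (seqTop C) (cylSet h) := by
  letI : TopologicalSpace C := ⊥
  haveI : DiscreteTopology C := ⟨rfl⟩
  rw [cylSet_eq]
  exact isClopen_iInter_of_finite fun i =>
    (isClopen_discrete {h.get i}).preimage (continuous_apply (i : ℕ))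

lemma FineLambda_zero (C : Type) : FineLambda C 0 = ∅ := by
  rw [FineLambda]; norm_num

lemma FineLambda_one (C : Type) : FineLambda C 1 = {S | IsOpen[seqTop C] S} := by
  rw [FineLambda]; simp

lemma FineLambda_of_one_lt (C : Type) {θ : Ordinal} (h2 : 1 < θ) :
    FineLambda C θ =
      {S | ∃ (I : Type) (T O : I → Set (ℕ → C)) (η : I → {x : Ordinal // x < θ}),
        (∀ i, IsOpen[seqTop C] (O i)) ∧ (Pairwise fun i j => Disjoint (O i) (O j)) ∧
        (∀ i, T i ⊆ O i) ∧ S = ⋃ i, T i ∧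
        ∀ i, T i ∈ FineLambda C (η i) ∨ (T i)ᶜ ∈ FineLambda C (η i)} := by
  rw [FineLambda, if_neg h2.ne', if_pos h2]

lemma main_aux (C : Type) : ∀ θ : Ordinal,
    (∀ S ∈ FineLambda C θ, ∀ h : List C, cylSet h ∩ S ∈ FineLambda C θ) ∧
    (∀ S ∈ FineK C θ, ∀ h : List C, cylSet h ∩ S ∈ FineK C θ) := by
  intro θ
  induction θ using Ordinal.induction with
  | h θ IH =>
  letI : TopologicalSpace (ℕ → C) := seqTop C
  rcases lt_trichotomy θ 1 with h1 | rfl | h2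
  · rw [Ordinal.lt_one_iff_zero] at h1
    subst h1
    constructor
    · intro S hS; rw [FineLambda_zero] at hS; exact hS.elim
    · intro S hS; rw [show FineK C 0 = ∅ from by
        ext x; simp [FineK, FineLambda_zero]] at hS; exact hS.elim
  · constructor
    · intro S hS h
      rw [FineLambda_one] at hS ⊢
      exact (cyl_clopen h).isOpen.inter hS
    · intro S hS h
      have hS' : Sᶜ ∈ FineLambda C 1 := hS
      show (cylSet h ∩ S)ᶜ ∈ FineLambda C 1
      rw [FineLambda_one] at hS' ⊢
      rw [compl_inter]
      exact (cyl_clopen h).compl.isOpen.union hS'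
  · constructor
    · intro S hS h
      rw [FineLambda_of_one_lt C h2] at hS ⊢
      obtain ⟨I, T, O, η, hO, hdisj, hsub, hUn, hmem⟩ := hS
      refine ⟨I, fun i => cylSet h ∩ T i, fun i => cylSet h ∩ O i, η, ?_, ?_, ?_, ?_, ?_⟩
      · exact fun i => (cyl_clopen h).isOpen.inter (hO i)
      · exact fun i j hij =>
          (hdisj hij).mono inter_subset_right inter_subset_right
      · exact fun i => inter_subset_inter_right _ (hsub i)
      · rw [hUn, inter_iUnion]
      · intro i
        rcases hmem i with hm | hm
        · exact Or.inl ((IH (η i) (η i).2).1 _ hm h)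
        · exact Or.inr ((IH (η i) (η i).2).2 (T i) hm h)
    · intro S hS h
      have hS' : Sᶜ ∈ FineLambda C θ := hS
      show (cylSet h ∩ S)ᶜ ∈ FineLambda C θ
      rw [FineLambda_of_one_lt C h2] at hS' ⊢
      obtain ⟨I, T, O, η, hO, hdisj, hsub, hUn, hmem⟩ := hS'
      refine ⟨Option I, fun o => o.elim (cylSet h)ᶜ (fun i => cylSet h ∩ T i),
        fun o => o.elim (cylSet h)ᶜ (fun i => cylSet h ∩ O i),
        fun o => o.elim ⟨1, h2⟩ η, ?_, ?_, ?_, ?_, ?_⟩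
      · rintro (_ | i)
        · exact (cyl_clopen h).compl.isOpen
        · exact (cyl_clopen h).isOpen.inter (hO i)
      · rintro (_ | i) (_ | j) hij
        · exact absurd rfl hij
        · exact disjoint_compl_left.mono_right inter_subset_left
        · exact disjoint_compl_right.mono_left inter_subset_left
        · exact (hdisj fun hh => hij (congrArg some hh)).mono
            inter_subset_right inter_subset_right
      · rintro (_ | i)
        · exact subset_rfl
        · exact inter_subset_inter_right _ (hsub i)
      · rw [compl_inter, iUnion_option]
        simp only [Option.elim]
        rw [← inter_iUnion, ← hUn]
        ext x
        by_cases hx : x ∈ cylSet h <;> simp [hx]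
      · rintro (_ | i)
        · left
          show (cylSet h)ᶜ ∈ FineLambda C 1
          rw [FineLambda_one]
          exact (cyl_clopen h).compl.isOpen
        · rcases hmem i with hm | hm
          · exact Or.inl ((IH (η i) (η i).2).1 _ hm h)
          · exact Or.inr ((IH (η i) (η i).2).2 (T i) hm h)

/-- Each level `Λ_θ` and `K_θ` is closed under intersection with a cylinder. -/
theorem statement17 (C : Type) (θ : Ordinal) (hθ : θ ≠ 0) :
    (∀ S : Set (ℕ → C), S ∈ FineLambda C θ → ∀ h : List C,
        cylSet h ∩ S ∈ FineLambda C θ) ∧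
      (∀ S : Set (ℕ → C), S ∈ FineK C θ → ∀ h : List C,
        cylSet h ∩ S ∈ FineK C θ) :=
  ⟨(main_aux C θ).1, (main_aux C θ).2⟩
end
end
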